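/- Let S = {v₁, …, vₙ} be a finite nonempty set of points in ℝ^m and let p ∈ ℝ^m. Then p ∈ conv(S) if and only if for every p' ∈ conv(S) there exists v ∈ S with d(p', v) ≥ d(p, v) (i.e., every point of conv(S) admits a pivot). -/

import Mathlib

open RealInnerProductSpace


/-- **Distance Duality.** `p ∈ conv(S)` iff every `p' ∈ conv(S)` admits a pivot,
i.e. a point `v ∈ S` with `d(p', v) ≥ d(p, v)`. -/
theorem distance_duality {m : ℕ} (S : Finset (EuclideanSpace ℝ (Fin m)))
    (hS : S.Nonempty) (p : EuclideanSpace ℝ (Fin m)) :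
    p ∈ convexHull ℝ (S : Set (EuclideanSpace ℝ (Fin m))) ↔
      ∀ p' ∈ convexHull ℝ (S : Set (EuclideanSpace ℝ (Fin m))),
        ∃ v ∈ S, dist p v ≤ dist p' v := by
  constructor
  · intro hp p' hp'
    by_contra hcon
    push_neg at hcon
    have hconv : Convex ℝ {x : EuclideanSpace ℝ (Fin m) |
        ⟪x, p - p'⟫ < (‖p‖ ^ 2 - ‖p'‖ ^ 2) / 2} :=
      convex_halfSpace_lt ⟨fun a b => inner_add_left a b _,
        fun c a => real_inner_smul_left a _ c⟩ _
    have hsub : (S : Set (EuclideanSpace ℝ (Fin m))) ⊆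
        {x | ⟪x, p - p'⟫ < (‖p‖ ^ 2 - ‖p'‖ ^ 2) / 2} := by
      intro v hv
      have hlt := hcon v hv
      have h1 : dist p' v ^ 2 < dist p v ^ 2 := by
        have := dist_nonneg (x := p') (y := v)
        nlinarith
      simp only [dist_eq_norm] at h1
      have e1 : ‖p' - v‖ ^ 2 = ‖p'‖ ^ 2 - 2 * ⟪p', v⟫ + ‖v‖ ^ 2 := norm_sub_sq_real p' v
      have e2 : ‖p - v‖ ^ 2 = ‖p‖ ^ 2 - 2 * ⟪p, v⟫ + ‖v‖ ^ 2 := norm_sub_sq_real p v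
      have e3 : ⟪v, p - p'⟫ = ⟪p, v⟫ - ⟪p', v⟫ := by
        rw [inner_sub_right, real_inner_comm v p, real_inner_comm v p']
      simp only [Set.mem_setOf_eq]
      linarith
    have hpC := convexHull_min hsub hconv hp
    simp only [Set.mem_setOf_eq] at hpC
    have e4 : ⟪p, p - p'⟫ = ‖p‖ ^ 2 - ⟪p, p'⟫ := by
      rw [inner_sub_right, real_inner_self_eq_norm_sq]
    have e5 : ‖p - p'‖ ^ 2 = ‖p‖ ^ 2 - 2 * ⟪p, p'⟫ + ‖p'‖ ^ 2 := norm_sub_sq_real p p'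
    nlinarith [sq_nonneg ‖p - p'‖]
  · intro h
    set K := convexHull ℝ (S : Set (EuclideanSpace ℝ (Fin m))) with hK
    have hKconv : Convex ℝ K := convex_convexHull ℝ _
    have hKne : K.Nonempty := hS.to_set.mono (subset_convexHull ℝ _)
    have hKcompact : IsCompact K := S.finite_toSet.isCompact_convexHull ℝ
    have hKcomplete : IsComplete K := hKcompact.isClosed.isComplete
    obtain ⟨p', hp'K, hmin⟩ :=
      exists_norm_eq_iInf_of_complete_convex hKne hKcomplete hKconv p
    have hproj := (norm_eq_iInf_iff_real_inner_le_zero hKconv hp'K).mp hmin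
    obtain ⟨v, hvS, hpv⟩ := h p' hp'K
    have hvK : v ∈ K := subset_convexHull ℝ _ hvS
    have hip : ⟪p - p', v - p'⟫ ≤ 0 := hproj v hvK
    have hexp : ‖p - v‖ ^ 2 =
        ‖p - p'‖ ^ 2 + 2 * ⟪p - p', p' - v⟫ + ‖p' - v‖ ^ 2 := by
      have : p - v = (p - p') + (p' - v) := by abel
      rw [this, norm_add_sq_real]
    have hip' : ⟪p - p', p' - v⟫ = -⟪p - p', v - p'⟫ := by
      rw [← inner_neg_right]
      congr 1
      abel
    have hsq : ‖p - v‖ ^ 2 ≤ ‖p' - v‖ ^ 2 := by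
      simp only [dist_eq_norm] at hpv
      have := norm_nonneg (p - v)
      nlinarith
    have hzero : ‖p - p'‖ ^ 2 ≤ 0 := by nlinarith
    have : p = p' := by
      have : ‖p - p'‖ = 0 := by nlinarith [norm_nonneg (p - p'), sq_nonneg ‖p - p'‖]
      rwa [norm_sub_eq_zero_iff] at this
    rw [this]; exact hp'K
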